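/- For every nonnegative measurable function V : ℝ₊ → ℝ₊ that is non-decreasing and integrable against Gaussian kernels, and every real a and e ≥ 0, ∫_{0}^{∞} 2·exp(-x²/2)·V(x) dx ≤ ∫_{0}^{∞} (exp(-(x - a·e)²/2) + exp(-(x + a·e)²/2))·V(x) dx. -/

import Mathlib

open MeasureTheory Real Set

lemma gauss_integrable : Integrable (fun x : ℝ => Real.exp (-x ^ 2 / 2)) := by
  have h : (fun x : ℝ => Real.exp (-x ^ 2 / 2)) = fun x => Real.exp (-(1/2) * x ^ 2) := by
    funext x; ring_nf
  rw [h]; exact integrable_exp_neg_mul_sq (by norm_num)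

lemma gauss_shift_integrable (c : ℝ) : Integrable (fun x : ℝ => Real.exp (-(x - c) ^ 2 / 2)) :=
  gauss_integrable.comp_sub_right c

lemma integral_Ioi_shift (h : ℝ → ℝ) (s c : ℝ) :
    ∫ x in Ioi s, h (x - c) = ∫ x in Ioi (s - c), h x := by
  have key : ∀ x : ℝ, (Ioi s).indicator (fun x => h (x - c)) x
      = (Ioi (s - c)).indicator h (x - c) := by
    intro x
    by_cases hx : x ∈ Ioi s
    · rw [indicator_of_mem hx, indicator_of_mem (by simpa [sub_lt_sub_iff_right] using hx)]
    · rw [indicator_of_notMem hx, indicator_of_notMem (by simpa [sub_lt_sub_iff_right] using hx)]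
  rw [← integral_indicator measurableSet_Ioi, ← integral_indicator measurableSet_Ioi]
  simp_rw [key]
  exact integral_sub_right_eq_self ((Ioi (s - c)).indicator h) c

noncomputable def G (t : ℝ) : ℝ := ∫ x in Set.Ioi t, Real.exp (-x ^ 2 / 2)

lemma G_split (u v : ℝ) (h : u ≤ v) :
    G u = (∫ x in u..v, Real.exp (-x ^ 2 / 2)) + G v := by
  rw [intervalIntegral.integral_of_le h]
  unfold G
  rw [← setIntegral_union (Ioc_disjoint_Ioi le_rfl) measurableSet_Ioi
      (gauss_integrable.integrableOn) (gauss_integrable.integrableOn),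
    Ioc_union_Ioi_eq_Ioi h]

lemma tail_core (s c : ℝ) (hs : 0 ≤ s) (hc : 0 ≤ c) :
    (∫ x in s..(s+c), Real.exp (-x ^ 2 / 2)) ≤ ∫ x in (s-c)..s, Real.exp (-x ^ 2 / 2) := by
  have h1 : (∫ x in (s-c)..s, Real.exp (-(2*s - x) ^ 2 / 2))
      = ∫ x in s..(s+c), Real.exp (-x ^ 2 / 2) := by
    have := intervalIntegral.integral_comp_sub_left (a := s - c) (b := s)
      (fun x => Real.exp (-x ^ 2 / 2)) (2*s)
    convert this using 2 <;> ring
  rw [← h1]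
  apply intervalIntegral.integral_mono_on (by linarith)
  · exact (Continuous.intervalIntegrable (by continuity) _ _)
  · exact (Continuous.intervalIntegrable (by continuity) _ _)
  · intro x hx
    simp only [mem_Icc] at hx
    apply Real.exp_le_exp.2
    nlinarith [hx.1, hx.2]

lemma tail_ineq (s c : ℝ) (hs : 0 ≤ s) :
    (∫ x in Ioi s, 2 * Real.exp (-x ^ 2 / 2)) ≤
      ∫ x in Ioi s, (Real.exp (-(x - c) ^ 2 / 2) + Real.exp (-(x + c) ^ 2 / 2)) := by
  wlog hc : 0 ≤ c with H
  · have heq : (fun x : ℝ => Real.exp (-(x - c) ^ 2 / 2) + Real.exp (-(x + c) ^ 2 / 2))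
        = fun x => Real.exp (-(x - (-c)) ^ 2 / 2) + Real.exp (-(x + (-c)) ^ 2 / 2) := by
      funext x
      rw [sub_neg_eq_add, ← sub_eq_add_neg, add_comm]
    rw [show (∫ x in Ioi s, (Real.exp (-(x - c) ^ 2 / 2) + Real.exp (-(x + c) ^ 2 / 2)))
        = ∫ x in Ioi s, (Real.exp (-(x - (-c)) ^ 2 / 2) + Real.exp (-(x + (-c)) ^ 2 / 2)) from by
      rw [heq]]
    exact H s (-c) hs (by linarith)
  have h1 : (∫ x in Ioi s, Real.exp (-(x - c) ^ 2 / 2)) = G (s - c) :=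
    integral_Ioi_shift (fun x => Real.exp (-x ^ 2 / 2)) s c
  have h2 : (∫ x in Ioi s, Real.exp (-(x + c) ^ 2 / 2)) = G (s + c) := by
    have heq : (fun x : ℝ => Real.exp (-(x + c) ^ 2 / 2))
        = fun x => Real.exp (-(x - (-c)) ^ 2 / 2) := by
      funext x; rw [sub_neg_eq_add]
    rw [heq]
    have := integral_Ioi_shift (fun x => Real.exp (-x ^ 2 / 2)) s (-c)
    simpa [sub_neg_eq_add, G] using this
  rw [integral_add ((gauss_shift_integrable c).integrableOn)
      (by
        have := (gauss_shift_integrable (-c)).integrableOn (s := Ioi s)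
        simpa [sub_neg_eq_add, IntegrableOn] using this), h1, h2]
  have hL : (∫ x in Ioi s, 2 * Real.exp (-x ^ 2 / 2)) = 2 * G s := by
    unfold G; rw [← integral_const_mul]
  rw [hL]
  have e1 : G (s - c) = (∫ x in (s-c)..s, Real.exp (-x ^ 2 / 2)) + G s :=
    G_split _ _ (by linarith)
  have e2 : G s = (∫ x in s..(s+c), Real.exp (-x ^ 2 / 2)) + G (s + c) :=
    G_split _ _ (by linarith)
  have := tail_core s c hs hc
  linarith

lemma gauss_shift_integrable' (c : ℝ) : Integrable (fun x : ℝ => Real.exp (-(x + c) ^ 2 / 2)) := by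
  have := gauss_shift_integrable (-c); simpa [sub_neg_eq_add] using this

lemma tail_lintegral (s c : ℝ) (hs : 0 ≤ s) :
    (∫⁻ x in Ioi s, ENNReal.ofReal (2 * Real.exp (-x ^ 2 / 2))) ≤
      ∫⁻ x in Ioi s, ENNReal.ofReal (Real.exp (-(x - c) ^ 2 / 2) + Real.exp (-(x + c) ^ 2 / 2)) := by
  have hint : Integrable (fun x : ℝ => Real.exp (-(x - c) ^ 2 / 2) + Real.exp (-(x + c) ^ 2 / 2)) :=
    (gauss_shift_integrable c).add (gauss_shift_integrable' c)
  rw [← ofReal_integral_eq_lintegral_ofReal ((gauss_integrable.const_mul 2).integrableOn)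
      (Filter.Eventually.of_forall fun x => by positivity),
    ← ofReal_integral_eq_lintegral_ofReal hint.integrableOn
      (Filter.Eventually.of_forall fun x => by positivity)]
  exact ENNReal.ofReal_le_ofReal (tail_ineq s c hs)

lemma upset_ineq (V : ℝ → ℝ) (hVmono : MonotoneOn V (Set.Ici 0)) (c t : ℝ) :
    (∫⁻ x in ({x | t < V x} ∩ Ici 0), ENNReal.ofReal (2 * Real.exp (-x ^ 2 / 2))) ≤
      ∫⁻ x in ({x | t < V x} ∩ Ici 0),
        ENNReal.ofReal (Real.exp (-(x - c) ^ 2 / 2) + Real.exp (-(x + c) ^ 2 / 2)) := by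
  set S : Set ℝ := {x | t < V x} ∩ Ici 0 with hS
  by_cases hne : S.Nonempty
  · set s := sInf S with hs
    have hbdd : BddBelow S := ⟨0, fun x hx => hx.2⟩
    have hs0 : 0 ≤ s := le_csInf hne fun x hx => hx.2
    have hsub1 : Ioi s ⊆ S := by
      intro y hy
      obtain ⟨x, hxS, hxy⟩ := exists_lt_of_csInf_lt hne hy
      exact ⟨lt_of_lt_of_le hxS.1 (hVmono hxS.2 (le_trans hxS.2 hxy.le) hxy.le),
        le_trans hxS.2 hxy.le⟩
    have hsub2 : S ⊆ Ici s := fun x hx => csInf_le hbdd hx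
    have hae : S =ᵐ[volume] Ioi s := by
      rw [MeasureTheory.ae_eq_set]
      constructor
      · apply measure_mono_null (t := {s}) _ (Real.volume_singleton)
        intro x hx
        have h1 : x ≤ s := not_lt.1 hx.2
        have h2 : s ≤ x := hsub2 hx.1
        simp [le_antisymm h1 h2]
      · rw [Set.diff_eq_empty.2 hsub1]; exact measure_empty
    rw [Measure.restrict_congr_set hae]
    exact tail_lintegral s c hs0
  · rw [Set.not_nonempty_iff_eq_empty.1 hne, Measure.restrict_empty]
    simp

lemma layer (V h : ℝ → ℝ) (hV : Measurable V) (hh : Measurable h) (hnn : ∀ x, 0 ≤ h x) :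
    (∫⁻ x in Ici (0:ℝ), ENNReal.ofReal (h x * V x))
      = ∫⁻ t in Ioi (0:ℝ), ∫⁻ x in ({x | t < V x} ∩ Ici 0), ENNReal.ofReal (h x) := by
  have step1 : ∀ x : ℝ, ENNReal.ofReal (h x * V x)
      = ∫⁻ t in Ioi (0:ℝ), (if t < V x then ENNReal.ofReal (h x) else 0) := by
    intro x
    have : (fun t : ℝ => if t < V x then ENNReal.ofReal (h x) else 0)
        = (Iio (V x)).indicator (fun _ => ENNReal.ofReal (h x)) := by
      funext t; simp [Set.indicator_apply, Set.mem_Iio]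
    rw [this, lintegral_indicator measurableSet_Iio, Measure.restrict_restrict measurableSet_Iio,
      setLIntegral_const, Set.Iio_inter_Ioi, Real.volume_Ioo,
      ← ENNReal.ofReal_mul (hnn x)]
    norm_num [mul_comm]
  simp_rw [step1]
  rw [lintegral_lintegral_swap]
  · congr 1
    funext t
    have hset : MeasurableSet {x : ℝ | t < V x} := measurableSet_lt measurable_const hV
    have : (fun x : ℝ => if t < V x then ENNReal.ofReal (h x) else 0)
        = {x : ℝ | t < V x}.indicator (fun x => ENNReal.ofReal (h x)) := by
      funext x; simp [Set.indicator_apply, Set.mem_setOf_eq]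
    rw [this, lintegral_indicator hset, Measure.restrict_restrict hset]
  · apply Measurable.aemeasurable
    apply Measurable.ite
    · exact measurableSet_lt measurable_snd (hV.comp measurable_fst)
    · exact (ENNReal.measurable_ofReal.comp (hh.comp measurable_fst))
    · exact measurable_const

theorem stmt_5 (a e : ℝ) (he : 0 ≤ e)
    (V : ℝ → ℝ) (hVmeas : Measurable V) (hVpos : ∀ x, 0 ≤ V x)
    (hVmono : MonotoneOn V (Set.Ici 0))
    (hVint : ∀ d : ℝ, IntegrableOn
      (fun x => (Real.exp (-(x - d) ^ 2 / 2) + Real.exp (-(x + d) ^ 2 / 2)) * V x)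
      (Set.Ici 0)) :
    (∫ x in Set.Ici (0 : ℝ), 2 * Real.exp (-x ^ 2 / 2) * V x) ≤
      ∫ x in Set.Ici (0 : ℝ),
        (Real.exp (-(x - a * e) ^ 2 / 2) + Real.exp (-(x + a * e) ^ 2 / 2)) * V x := by
  set c := a * e with hc
  have hfm : Measurable fun x : ℝ => 2 * Real.exp (-x ^ 2 / 2) :=
    (continuous_const.mul (Real.continuous_exp.comp (by continuity))).measurable
  have hgm : Measurable fun x : ℝ =>
      Real.exp (-(x - c) ^ 2 / 2) + Real.exp (-(x + c) ^ 2 / 2) :=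
    ((Real.continuous_exp.comp (by continuity)).add
      (Real.continuous_exp.comp (by continuity))).measurable
  have hfint : IntegrableOn (fun x => 2 * Real.exp (-x ^ 2 / 2) * V x) (Set.Ici 0) := by
    have := hVint 0
    apply this.congr_fun _ measurableSet_Ici
    intro x _
    simp only [sub_zero, add_zero]
    ring
  have hgint := hVint c
  have hLHS : (∫ x in Set.Ici (0:ℝ), 2 * Real.exp (-x ^ 2 / 2) * V x)
      = (∫⁻ x in Set.Ici (0:ℝ), ENNReal.ofReal (2 * Real.exp (-x ^ 2 / 2) * V x)).toReal := by
    apply integral_eq_lintegral_of_nonneg_ae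
    · exact Filter.Eventually.of_forall fun x => by
        have := hVpos x; positivity
    · exact (hfm.mul hVmeas).aestronglyMeasurable
  have hRHS : (∫ x in Set.Ici (0:ℝ),
        (Real.exp (-(x - c) ^ 2 / 2) + Real.exp (-(x + c) ^ 2 / 2)) * V x)
      = (∫⁻ x in Set.Ici (0:ℝ), ENNReal.ofReal
          ((Real.exp (-(x - c) ^ 2 / 2) + Real.exp (-(x + c) ^ 2 / 2)) * V x)).toReal := by
    apply integral_eq_lintegral_of_nonneg_ae
    · exact Filter.Eventually.of_forall fun x => by
        have := hVpos x; positivity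
    · exact (hgm.mul hVmeas).aestronglyMeasurable
  rw [hLHS, hRHS]
  apply ENNReal.toReal_mono
  · rw [← ofReal_integral_eq_lintegral_ofReal hgint
      (Filter.Eventually.of_forall fun x => by have := hVpos x; positivity)]
    exact ENNReal.ofReal_ne_top
  · rw [layer V _ hVmeas hfm (fun x => by positivity),
      layer V _ hVmeas hgm (fun x => by positivity)]
    exact lintegral_mono fun t => upset_ineq V hVmono c t
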